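/- Completeness of ADL with respect to the WFS: Let D = ⟨R, C, ∅⟩ be a defeasible theory such that R_u = ∅ and the conflict sets of C are minimal (C = C_MIN), and let Π be the logic program translation of D. Then for every p ∈ Lit(D): (1) if Π ⊨_WFS p then D ⊨_ADL p, and (2) if Π ⊣_WFS p then D ⊣_ADL p. -/

import Mathlib

namespace DLWFS

universe u

/-- Ground literals over a type `A` of atoms: atoms and their classical complements. -/
inductive Lit (A : Type u) : Type u where
  | pos : A → Lit A
  | neg : A → Lit A

/-- The classical complement `p̄` of a literal `p`. -/
def Lit.compl {A : Type u} : Lit A → Lit A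
  | .pos a => .neg a
  | .neg a => .pos a

/-- The three kinds of rules of a defeasible theory. -/
inductive RuleKind : Type where
  | strict
  | defeasible
  | defeater
deriving DecidableEq

/-- A rule of a defeasible theory: a kind, a body (a set of literals) and a head literal. -/
structure DRule (A : Type u) where
  kind : RuleKind
  body : Set (Lit A)
  head : Lit A

/-- A defeasible theory `D = ⟨R, C, ≺⟩`. -/
structure DTheory (A : Type u) where
  rules : Set (DRule A)
  conflicts : Set (Set (Lit A))
  prec : DRule A → DRule A → Prop

namespace DTheory

variable {A : Type u}

/-- The strict rules `R_s`. -/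
def Rs (D : DTheory A) : Set (DRule A) := {r ∈ D.rules | r.kind = RuleKind.strict}

/-- The defeasible rules `R_d`. -/
def Rd (D : DTheory A) : Set (DRule A) := {r ∈ D.rules | r.kind = RuleKind.defeasible}

/-- The defeater rules `R_u`. -/
def Ru (D : DTheory A) : Set (DRule A) := {r ∈ D.rules | r.kind = RuleKind.defeater}

/-- `C[p]`: the conflict sets containing literal `p`. -/
def Cset (D : DTheory A) (p : Lit A) : Set (Set (Lit A)) := {c ∈ D.conflicts | p ∈ c}

/-- Structural conditions in the definition of a defeasible theory: a countable set of
rules with finite bodies, a countable set of finite conflict sets containing every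
minimal conflict set `{p, ¬p}`, and an acyclic priority relation over non-strict rules. -/
def WellFormed (D : DTheory A) : Prop :=
  D.rules.Countable ∧ D.conflicts.Countable ∧
  (∀ r ∈ D.rules, r.body.Finite) ∧
  (∀ c ∈ D.conflicts, c.Finite) ∧
  (∀ p : A, ({Lit.pos p, Lit.neg p} : Set (Lit A)) ∈ D.conflicts) ∧
  (∀ r s, D.prec r s → r.kind ≠ RuleKind.strict ∧ s.kind ≠ RuleKind.strict) ∧
  (∀ r, ¬ Relation.TransGen D.prec r r)

/-- `C = C_MIN`: the conflict sets are exactly the minimal ones `{p, ¬p}`. -/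
def MinimalConflicts (D : DTheory A) : Prop :=
  D.conflicts = {c | ∃ p : A, c = ({Lit.pos p, Lit.neg p} : Set (Lit A))}

end DTheory

/-- A 3-valued interpretation: a pair `⟨T, F⟩` of sets. -/
abbrev Interp (L : Type u) : Type u := Set L × Set L

variable {A : Type u}

/-- `S` is ADL-unfounded with respect to theory `D` and interpretation `I = ⟨T, F⟩`. -/
def ADLUnfounded (D : DTheory A) (I : Interp (Lit A)) (S : Set (Lit A)) : Prop :=
  ∀ p ∈ S,
    (∀ r ∈ D.Rs, r.head = p → (r.body ∩ (I.2 ∪ S)).Nonempty) ∧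
    (∀ r ∈ D.Rd, r.head = p →
      (r.body ∩ (I.2 ∪ S)).Nonempty ∨
      ∃ c ∈ D.conflicts, p ∈ c ∧
        ∀ q ∈ c \ {p}, ∃ s ∈ D.rules, s.head = q ∧ s.body ⊆ I.1 ∧
          (D.prec r s ∨ s.kind = RuleKind.strict))

/-- `S` is NDL-unfounded with respect to theory `D` and interpretation `I = ⟨T, F⟩`. -/
def NDLUnfounded (D : DTheory A) (I : Interp (Lit A)) (S : Set (Lit A)) : Prop :=
  ∀ p ∈ S,
    (∀ r ∈ D.Rs, r.head = p → (r.body ∩ (I.2 ∪ S)).Nonempty) ∧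
    (∀ r ∈ D.Rd, r.head = p →
      (r.body ∩ (I.2 ∪ S)).Nonempty ∨
      ∃ c ∈ D.conflicts, p ∈ c ∧
        ∀ q ∈ c \ {p}, ∃ s ∈ D.rules, s.head = q ∧ s.body ⊆ I.1 ∧
          ¬ D.prec s r)

/-- `U_D(I)` for ADL: the union of all ADL-unfounded sets. -/
def UA (D : DTheory A) (I : Interp (Lit A)) : Set (Lit A) :=
  ⋃₀ {S | ADLUnfounded D I S}

/-- `U_D(I)` for NDL: the union of all NDL-unfounded sets. -/
def UN (D : DTheory A) (I : Interp (Lit A)) : Set (Lit A) :=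
  ⋃₀ {S | NDLUnfounded D I S}

/-- `T_D(I)`: the literals having a witness of provability with respect to `I = ⟨T, F⟩`. -/
def TD (D : DTheory A) (I : Interp (Lit A)) : Set (Lit A) :=
  {p | ∃ r ∈ D.rules, r.head = p ∧ r.body ⊆ I.1 ∧
    (r.kind = RuleKind.strict ∨
      (r.kind = RuleKind.defeasible ∧
        ∀ c ∈ D.conflicts, p ∈ c →
          ∃ q ∈ c \ {p}, ∀ s ∈ D.rules, s.head = q →
            (D.prec s r ∨ (s.body ∩ I.2).Nonempty)))}

/-- `W_D` for ADL. -/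
def WA (D : DTheory A) (I : Interp (Lit A)) : Interp (Lit A) := (TD D I, UA D I)

/-- `W_D` for NDL. -/
def WN (D : DTheory A) (I : Interp (Lit A)) : Interp (Lit A) := (TD D I, UN D I)

/-- `I` is the well-founded model for the operator `W`: the least fixpoint of `W`
(componentwise order). -/
def IsWFModel {L : Type u} (W : Interp L → Interp L) (I : Interp L) : Prop :=
  W I = I ∧ ∀ J, W J = J → I.1 ⊆ J.1 ∧ I.2 ⊆ J.2

/-- A rule of a normal logic program: `head ← pos, ∼neg`. -/
structure NRule (A : Type u) where
  head : A
  pos : Set A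
  neg : Set A

/-- A normal logic program: a set of rules. -/
abbrev NProgram (A : Type u) : Type u := Set (NRule A)

/-- Structural conditions in the definition of a normal logic program: a countable
set of ground rules with finite bodies. -/
def NProgram.WellFormed (P : NProgram A) : Prop :=
  P.Countable ∧ ∀ r ∈ P, r.pos.Finite ∧ r.neg.Finite

/-- The immediate consequence operator `T_Π` on 3-valued interpretations. -/
def TP (P : NProgram A) (I : Interp A) : Set A :=
  {a | ∃ r ∈ P, r.head = a ∧ r.pos ⊆ I.1 ∧ r.neg ⊆ I.2}

/-- `S` is an unfounded set of program `P` with respect to interpretation `I = ⟨T, F⟩`. -/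
def PUnfounded (P : NProgram A) (I : Interp A) (S : Set A) : Prop :=
  ∀ p ∈ S, ∀ r ∈ P, r.head = p →
    (r.pos ∩ (I.2 ∪ S)).Nonempty ∨ (r.neg ∩ I.1).Nonempty

/-- `U_Π(I)`: the greatest unfounded set (union of all unfounded sets). -/
def UP (P : NProgram A) (I : Interp A) : Set A :=
  ⋃₀ {S | PUnfounded P I S}

/-- `W_Π(I) = ⟨T_Π(I), U_Π(I)⟩`. -/
def WP (P : NProgram A) (I : Interp A) : Interp A := (TP P I, UP P I)

/-- Transfinite iteration of an operator `W` from `⊥`, taking suprema at limit ordinals. -/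
noncomputable def iterW {α : Type*} [CompleteLattice α] (W : α → α) : Ordinal.{0} → α :=
  fun o =>
    Ordinal.limitRecOn (motive := fun _ => α) o ⊥ (fun _ ih => W ih)
      (fun o' _ ih => ⨆ x : Set.Iio o', ih x.1 x.2)

/-- One step of the immediate consequence operator for a set of defeasible-theory rules. -/
def TRstep (R : Set (DRule A)) (S : Set (Lit A)) : Set (Lit A) :=
  {p | ∃ r ∈ R, r.head = p ∧ r.body ⊆ S}

/-- The finite iterates `T_R ↑ n`. -/
def TRiter (R : Set (DRule A)) : ℕ → Set (Lit A)
  | 0 => ∅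
  | n + 1 => TRstep R (TRiter R n)

/-- `Cl(R) = T_R ↑ ω`. -/
def ClR (R : Set (DRule A)) : Set (Lit A) := ⋃ n, TRiter R n

/-- The `α`-reduct `D_α^S` of a defeasible theory. -/
def alphaReduct (D : DTheory A) (S : Set (Lit A)) : Set (DRule A) :=
  D.Rs ∪ {r ∈ D.Rd | ∀ c ∈ D.conflicts, r.head ∈ c → ∃ q ∈ c \ {r.head}, q ∉ S}

/-- The ambiguity-propagating operator `α_D(S) = Cl(D_α^S)`. -/
def alphaOp (D : DTheory A) (S : Set (Lit A)) : Set (Lit A) := ClR (alphaReduct D S)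

/-- The `β`-reduct `D_β^S` of a defeasible theory. -/
def betaReduct (D : DTheory A) (S : Set (Lit A)) : Set (DRule A) :=
  D.Rs ∪ {r ∈ D.Rd | ∀ c ∈ D.conflicts, r.head ∈ c →
    ∃ q ∈ c \ {r.head}, ∀ s ∈ D.rules, s.head = q → (¬ s.body ⊆ S ∨ D.prec s r)}

/-- The ambiguity-blocking operator `β_D(S) = Cl(D_β^S)`. -/
def betaOp (D : DTheory A) (S : Set (Lit A)) : Set (Lit A) := ClR (betaReduct D S)

/-- `S` is an `α`-stable set of `D`. -/
def AlphaStable (D : DTheory A) (S : Set (Lit A)) : Prop := alphaOp D S = S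

/-- `S` is a `β`-stable set of `D`. -/
def BetaStable (D : DTheory A) (S : Set (Lit A)) : Prop := betaOp D S = S

/-- The sequence `X_D↑λ`: `X↑0 = ∅`, `X↑(λ+1) = β_D(β_D(X↑λ))`, unions at limits. -/
noncomputable def Xseq (D : DTheory A) : Ordinal.{0} → Set (Lit A) :=
  iterW (fun S => betaOp D (betaOp D S))

/-- The Gelfond–Lifschitz reduct `Π^S`. -/
def glReduct (P : NProgram A) (S : Set A) : NProgram A :=
  {r' | ∃ r ∈ P, r.neg ∩ S = ∅ ∧ r' = NRule.mk r.head r.pos ∅}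

/-- One step of the immediate consequence operator for a NAF-free program. -/
def TPstep (P : NProgram A) (S : Set A) : Set A :=
  {a | ∃ r ∈ P, r.head = a ∧ r.pos ⊆ S}

/-- The finite iterates `T_Π ↑ n` of a NAF-free program. -/
def TPiter (P : NProgram A) : ℕ → Set A
  | 0 => ∅
  | n + 1 => TPstep P (TPiter P n)

/-- `Cl(Π) = T_Π ↑ ω`. -/
def ClP (P : NProgram A) : Set A := ⋃ n, TPiter P n

/-- The Gelfond–Lifschitz operator `γ_Π(S) = Cl(Π^S)`. -/
def gamma (P : NProgram A) (S : Set A) : Set A := ClP (glReduct P S)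

/-- `S` is a stable model of `P`. -/
def StableModel (P : NProgram A) (S : Set A) : Prop := gamma P S = S

/-- `Prod(C[p])`: all sets obtained by choosing one literal other than `p` from each
conflict set containing `p`. -/
def ProdC (D : DTheory A) (p : Lit A) : Set (Set (Lit A)) :=
  {Q | ∃ f : Set (Lit A) → Lit A,
    (∀ c ∈ D.conflicts, p ∈ c → f c ∈ c \ {p}) ∧
    Q = f '' {c ∈ D.conflicts | p ∈ c}}

/-- The logic program translation `Π_D` of a defeasible theory `D` (negative literals
are treated as fresh atoms, so the atoms of the program are the literals of `D`). -/
def lpTrans (D : DTheory A) : NProgram (Lit A) :=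
  {r' | ∃ r ∈ D.Rs, r' = NRule.mk r.head r.body ∅} ∪
  {r' | ∃ r ∈ D.Rd, ∃ Q ∈ ProdC D r.head, r' = NRule.mk r.head r.body Q}

/-- The explicit version `Φ` of a normal program `Π`: atoms of `Φ` are the literals
over the atoms of `Π` (`¬p` being a fresh atom). -/
def explicitVer (P : NProgram A) : NProgram (Lit A) :=
  {r' | ∃ r ∈ P, r' = NRule.mk (Lit.pos r.head) (Lit.pos '' r.pos ∪ Lit.neg '' r.neg) ∅} ∪
  {r' | ∃ p : A, r' = NRule.mk (Lit.neg p) ∅ {Lit.pos p}}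

/-- The minimal conflict sets over atom type `A`. -/
def CMin (A : Type u) : Set (Set (Lit A)) :=
  {c | ∃ p : A, c = ({Lit.pos p, Lit.neg p} : Set (Lit A))}

/-- The defeasible theory translation `D_Π` of a normal program `Π`: each program rule
becomes a strict rule (default literals `∼b` becoming negative literals `¬b`), and each
atom `p` yields a presumption `∅ ⇒ ¬p`; conflict sets are minimal and `≺` is empty. -/
def dtTrans (P : NProgram A) : DTheory A :=
  { rules :=
      {e | ∃ r ∈ P, e = DRule.mk RuleKind.strict
            (Lit.pos '' r.pos ∪ Lit.neg '' r.neg) (Lit.pos r.head)} ∪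
      {e | ∃ p : A, e = DRule.mk RuleKind.defeasible ∅ (Lit.neg p)}
    conflicts := CMin A
    prec := fun _ _ => False }

/-- `M^¬ = M ∪ {¬p : p ∉ M}`, atoms being identified with positive literals. -/
def negCompl (M : Set A) : Set (Lit A) :=
  Lit.pos '' M ∪ Lit.neg '' {p | p ∉ M}

end DLWFS

namespace DLWFS

section Aux

variable {A : Type*}

lemma lit_compl_ne (p : Lit A) : p.compl ≠ p := by
  cases p <;> simp [Lit.compl]

lemma lit_compl_compl (p : Lit A) : p.compl.compl = p := by
  cases p <;> rfl

lemma conf_eq (D : DTheory A) (hmin : D.MinimalConflicts) {c : Set (Lit A)} {p : Lit A}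
    (hc : c ∈ D.conflicts) (hp : p ∈ c) : c = {p, p.compl} := by
  rw [hmin] at hc
  obtain ⟨a, rfl⟩ := hc
  simp only [Set.mem_insert_iff, Set.mem_singleton_iff] at hp
  rcases hp with rfl | rfl
  · rfl
  · exact Set.pair_comm _ _

lemma conf_mem (D : DTheory A) (hwf : D.WellFormed) (p : Lit A) :
    ({p, p.compl} : Set (Lit A)) ∈ D.conflicts := by
  have h := hwf.2.2.2.2.1
  cases p with
  | pos a => exact h a
  | neg a => rw [show ({Lit.neg a, (Lit.neg a).compl} : Set (Lit A)) = {Lit.pos a, Lit.neg a}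
      from Set.pair_comm _ _]; exact h a

lemma pair_diff (p : Lit A) : ({p, p.compl} : Set (Lit A)) \ {p} = {p.compl} := by
  ext q
  simp only [Set.mem_diff, Set.mem_insert_iff, Set.mem_singleton_iff]
  constructor
  · rintro ⟨h1 | h1, h2⟩
    · exact absurd h1 h2
    · exact h1
  · rintro rfl
    exact ⟨Or.inr rfl, lit_compl_ne p⟩

lemma conflicts_setOf (D : DTheory A) (hwf : D.WellFormed) (hmin : D.MinimalConflicts)
    (p : Lit A) : {c | c ∈ D.conflicts ∧ p ∈ c} = {({p, p.compl} : Set (Lit A))} := by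
  ext c
  constructor
  · rintro ⟨h1, h2⟩
    exact conf_eq D hmin h1 h2
  · rintro rfl
    exact ⟨conf_mem D hwf p, Set.mem_insert _ _⟩

lemma prodC_iff (D : DTheory A) (hwf : D.WellFormed) (hmin : D.MinimalConflicts)
    (p : Lit A) {Q : Set (Lit A)} : Q ∈ ProdC D p ↔ Q = {p.compl} := by
  constructor
  · rintro ⟨f, hf, rfl⟩
    rw [show {c | c ∈ D.conflicts ∧ p ∈ c} = {({p, p.compl} : Set (Lit A))}
      from conflicts_setOf D hwf hmin p, Set.image_singleton]
    have h := hf _ (conf_mem D hwf p) (Set.mem_insert _ _)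
    rw [pair_diff] at h
    rw [h]
  · rintro rfl
    refine ⟨fun _ => p.compl, ?_, ?_⟩
    · intro c hc hpc
      rw [conf_eq D hmin hc hpc, pair_diff]
      exact rfl
    · rw [show {c | c ∈ D.conflicts ∧ p ∈ c} = {({p, p.compl} : Set (Lit A))}
        from conflicts_setOf D hwf hmin p, Set.image_singleton]

lemma adlUnfounded_UA (D : DTheory A) (I : Interp (Lit A)) :
    ADLUnfounded D I (UA D I) := by
  intro p hp
  obtain ⟨S, hS, hpS⟩ := hp
  have h := hS p hpS
  have mono : ∀ B : Set (Lit A), (B ∩ (I.2 ∪ S)).Nonempty → (B ∩ (I.2 ∪ UA D I)).Nonempty := by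
    rintro B ⟨q, hq1, hq2⟩
    refine ⟨q, hq1, ?_⟩
    rcases hq2 with hq2 | hq2
    · exact Or.inl hq2
    · exact Or.inr ⟨S, hS, hq2⟩
  constructor
  · intro r hr hh
    exact mono _ (h.1 r hr hh)
  · intro r hr hh
    rcases h.2 r hr hh with h' | h'
    · exact Or.inl (mono _ h')
    · exact Or.inr h'

lemma pUnfounded_UP (P : NProgram A) (I : Interp A) :
    PUnfounded P I (UP P I) := by
  intro p hp r hr hh
  obtain ⟨S, hS, hpS⟩ := hp
  rcases hS p hpS r hr hh with h' | h'
  · obtain ⟨q, hq1, hq2⟩ := h'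
    refine Or.inl ⟨q, hq1, ?_⟩
    rcases hq2 with hq2 | hq2
    · exact Or.inl hq2
    · exact Or.inr ⟨S, hS, hq2⟩
  · exact Or.inr h'

end Aux

/-- **Completeness of ADL wrt the WFS.** Let `D = ⟨R, C, ∅⟩` be a defeasible theory
with `R_u = ∅` and minimal conflict sets, and let `Π` be its logic program
translation. For every literal `p`: if `Π ⊨_WFS p` then `D ⊨_ADL p`, and if
`Π ⊣_WFS p` then `D ⊣_ADL p`. -/
theorem adl_complete_wrt_wfs {A : Type*} (D : DTheory A)
    (hwf : D.WellFormed)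
    (hru : D.Ru = ∅)
    (hprec : ∀ r s, ¬ D.prec r s)
    (hmin : D.MinimalConflicts)
    (ID : Interp (Lit A)) (hID : IsWFModel (WA D) ID)
    (IP : Interp (Lit A)) (hIP : IsWFModel (WP (lpTrans D)) IP) :
    ∀ p : Lit A, (p ∈ IP.1 → p ∈ ID.1) ∧ (p ∈ IP.2 → p ∈ ID.2) := by
  have hTD : TD D ID = ID.1 := congrArg Prod.fst hID.1
  have hUA : UA D ID = ID.2 := congrArg Prod.snd hID.1
  -- every rule is strict or defeasible
  have hkind : ∀ r ∈ D.rules, r ∈ D.Rs ∨ r ∈ D.Rd := by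
    intro r hr
    cases hk : r.kind with
    | strict => exact Or.inl ⟨hr, hk⟩
    | defeasible => exact Or.inr ⟨hr, hk⟩
    | defeater =>
        exact absurd (show r ∈ D.Ru from ⟨hr, hk⟩) (by rw [hru]; exact Set.notMem_empty r)
  -- ID.2 is ADL-unfounded wrt ID
  have hFunf : ADLUnfounded D ID ID.2 := by
    rw [← hUA]; exact adlUnfounded_UA D ID
  have hUU : ID.2 ∪ ID.2 = ID.2 := Set.union_self _
  -- T-component equality
  have hTPeq : TP (lpTrans D) ID = ID.1 := by
    ext p
    constructor
    · rintro ⟨r', hr', hh, hpos, hneg⟩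
      rcases hr' with ⟨r, hrS, rfl⟩ | ⟨r, hrd, Q, hQ, rfl⟩
      · -- strict rule
        rw [← hTD]
        exact ⟨r, hrS.1, hh, hpos, Or.inl hrS.2⟩
      · -- defeasible rule
        simp only at hh hpos hneg
        subst hh
        rw [prodC_iff D hwf hmin _] at hQ
        subst hQ
        have hcomplF : r.head.compl ∈ ID.2 := hneg rfl
        by_cases hall : ∀ s ∈ D.rules, s.head = r.head.compl → (s.body ∩ ID.2).Nonempty
        · rw [← hTD]
          refine ⟨r, hrd.1, rfl, hpos, Or.inr ⟨hrd.2, ?_⟩⟩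
          intro c hc hpc
          rw [conf_eq D hmin hc hpc]
          refine ⟨r.head.compl, by rw [pair_diff]; exact rfl, ?_⟩
          intro s hs hsh
          exact Or.inr (hall s hs hsh)
        · push_neg at hall
          obtain ⟨s, hs, hsh, hsne⟩ := hall
          rw [← Set.not_nonempty_iff_eq_empty] at hsne
          have h2 := hFunf r.head.compl hcomplF
          rcases hkind s hs with hsS | hsD
          · have h' := h2.1 s hsS hsh
            rw [hUU] at h'
            exact absurd h' hsne
          · rcases h2.2 s hsD hsh with h' | ⟨c, hc, hpc, hq⟩
            · rw [hUU] at h'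
              exact absurd h' hsne
            · have hceq := conf_eq D hmin hc hpc
              subst hceq
              obtain ⟨t, ht, hth, htb, htk⟩ := hq r.head
                (by rw [pair_diff, lit_compl_compl]; exact rfl)
              rcases htk with htk | htk
              · exact absurd htk (hprec _ _)
              · rw [← hTD]
                exact ⟨t, ht, hth, htb, Or.inl htk⟩
    · intro hp
      rw [← hTD] at hp
      obtain ⟨r, hr, hh, hbody, hopt⟩ := hp
      rcases hopt with hk | ⟨hk, hcond⟩
      · exact ⟨NRule.mk r.head r.body ∅, Or.inl ⟨r, ⟨hr, hk⟩, rfl⟩, hh,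
          hbody, Set.empty_subset _⟩
      · subst hh
        obtain ⟨q, hq, hq2⟩ := hcond _ (conf_mem D hwf r.head) (Set.mem_insert _ _)
        rw [pair_diff] at hq
        subst hq
        have hcF : r.head.compl ∈ ID.2 := by
          rw [← hUA]
          refine ⟨{r.head.compl}, ?_, rfl⟩
          intro x hx
          have hx' : x = r.head.compl := hx
          subst hx'
          have hblock : ∀ s ∈ D.rules, s.head = r.head.compl →
              (s.body ∩ (ID.2 ∪ {r.head.compl})).Nonempty := by
            intro s hs hsh
            rcases hq2 s hs hsh with h' | ⟨y, hy1, hy2⟩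
            · exact absurd h' (hprec _ _)
            · exact ⟨y, hy1, Or.inl hy2⟩
          exact ⟨fun s hsS hsh => hblock s hsS.1 hsh,
            fun s hsD hsh => Or.inl (hblock s hsD.1 hsh)⟩
        refine ⟨NRule.mk r.head r.body {r.head.compl},
          Or.inr ⟨r, ⟨hr, hk⟩, {r.head.compl}, (prodC_iff D hwf hmin _).mpr rfl, rfl⟩,
          rfl, hbody, ?_⟩
        rintro x rfl
        exact hcF
  -- F-component equality
  have hUPeq : UP (lpTrans D) ID = ID.2 := by
    apply Set.Subset.antisymm
    · -- UP ⊆ ID.2 : show UP is ADL-unfounded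
      have hUPunf : PUnfounded (lpTrans D) ID (UP (lpTrans D) ID) := pUnfounded_UP _ _
      rw [← hUA]
      intro p hp
      refine ⟨UP (lpTrans D) ID, ?_, hp⟩
      intro x hx
      constructor
      · intro r hrS hh
        rcases hUPunf x hx (NRule.mk r.head r.body ∅)
            (Or.inl ⟨r, hrS, rfl⟩) hh with h' | ⟨y, hy1, _⟩
        · exact h'
        · exact absurd hy1 (Set.notMem_empty y)
      · intro r hrD hh
        rcases hUPunf x hx (NRule.mk r.head r.body {r.head.compl})
            (Or.inr ⟨r, hrD, {r.head.compl}, (prodC_iff D hwf hmin _).mpr rfl, rfl⟩)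
            hh with h' | ⟨y, hy1, hy2⟩
        · exact Or.inl h'
        · -- y = r.head.compl = x.compl is in ID.1 = TD
          have hy : y = x.compl := by rw [← hh]; exact hy1
          subst hy
          rw [← hTD] at hy2
          obtain ⟨s, hs, hsh, hsb, hsk⟩ := hy2
          rcases hsk with hsk | ⟨hsk, hscond⟩
          · refine Or.inr ⟨{x, x.compl}, conf_mem D hwf x, Set.mem_insert _ _, ?_⟩
            intro q hq
            rw [pair_diff] at hq
            subst hq
            exact ⟨s, hs, hsh, hsb, Or.inr hsk⟩
          · -- witness for x.compl is defeasible: its blocking condition blocks r itself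
            obtain ⟨q, hq, hq2⟩ := hscond _ (conf_mem D hwf x.compl) (Set.mem_insert _ _)
            rw [pair_diff] at hq
            subst hq
            rcases hq2 r hrD.1 (by rw [lit_compl_compl]; exact hh) with h' | ⟨z, hz1, hz2⟩
            · exact absurd h' (hprec _ _)
            · exact Or.inl ⟨z, hz1, Or.inl hz2⟩
    · -- ID.2 ⊆ UP : ID.2 is P-unfounded
      intro p hp
      refine ⟨ID.2, ?_, hp⟩
      intro x hx r' hr' hh
      rcases hr' with ⟨r, hrS, rfl⟩ | ⟨r, hrD, Q, hQ, rfl⟩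
      · refine Or.inl ?_
        have h := (hFunf x hx).1 r hrS hh
        rw [hUU] at h
        obtain ⟨y, hy1, hy2⟩ := h
        exact ⟨y, hy1, Or.inl hy2⟩
      · simp only at hh ⊢
        rcases (hFunf x hx).2 r hrD hh with h' | ⟨c, hc, hxc, hq⟩
        · rw [hUU] at h'
          obtain ⟨y, hy1, hy2⟩ := h'
          exact Or.inl ⟨y, hy1, Or.inl hy2⟩
        · have hceq := conf_eq D hmin hc hxc
          subst hceq
          obtain ⟨s, hs, hsh, hsb, hsk⟩ := hq x.compl (by rw [pair_diff]; exact rfl)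
          have hxT : x.compl ∈ ID.1 := by
            rcases hsk with hsk | hsk
            · exact absurd hsk (hprec _ _)
            · rw [← hTD]
              exact ⟨s, hs, hsh, hsb, Or.inl hsk⟩
          rw [prodC_iff D hwf hmin _] at hQ
          subst hQ
          refine Or.inr ⟨r.head.compl, rfl, ?_⟩
          rw [hh]
          exact hxT
  have hfix : WP (lpTrans D) ID = ID := by
    show (TP (lpTrans D) ID, UP (lpTrans D) ID) = ID
    rw [hTPeq, hUPeq]
  intro p
  exact ⟨fun h => (hIP.2 ID hfix).1 h, fun h => (hIP.2 ID hfix).2 h⟩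

end DLWFS
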